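/- Let θ ∈ (0, 1/4], x ∈ (θ²/(2-θ)², 1/4], and let A = [[(2-θ)(1-x), -(1-θ)(1-x)], [1, 0]]. Write (a_t, -b_t) for the first row of A^t. Then for every natural number t, max{|a_t|, |b_t|} ≤ (t+1)(1-θ)^{t/2}. -/

import Mathlib

open Matrix

set_option maxHeartbeats 1000000 in

theorem agd_complex_regime_entry_bound (θ x : ℝ) (hθ : 0 < θ) (hθ' : θ ≤ 1/4)
    (hx : θ ^ 2 / (2 - θ) ^ 2 < x) (hx' : x ≤ 1/4)
    (A : Matrix (Fin 2) (Fin 2) ℝ)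
    (hA : A = !![(2 - θ) * (1 - x), -((1 - θ) * (1 - x)); 1, 0]) (t : ℕ) :
    max |(A ^ t) 0 0| |-((A ^ t) 0 1)| ≤ ((t : ℝ) + 1) * (1 - θ) ^ ((t : ℝ) / 2) := by
  set p : ℝ := (2 - θ) * (1 - x) with hp
  set s : ℝ := (1 - θ) * (1 - x) with hs
  have h2θ : (0:ℝ) < 2 - θ := by linarith
  have hθ1 : (0:ℝ) < 1 - θ := by linarith
  have hx0 : (0:ℝ) < x := lt_trans (by positivity) hx
  have hx1 : (0:ℝ) < 1 - x := by linarith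
  have hs0 : 0 < s := by positivity
  have hs1 : s ≤ 1 := by rw [hs]; nlinarith
  have hsθ : s ≤ 1 - θ := by rw [hs]; nlinarith
  have hxq : θ^2 < x * (2-θ)^2 := by
    have := (div_lt_iff₀ (by positivity : (0:ℝ) < (2-θ)^2)).mp hx
    linarith
  have hd0 : 0 < 4 * s - p ^ 2 := by nlinarith
  set d : ℝ := 4 * s - p ^ 2 with hdd
  set μ : ℂ := ⟨p / 2, Real.sqrt d / 2⟩ with hμ
  set ν : ℂ := ⟨p / 2, -(Real.sqrt d / 2)⟩ with hν
  have hsd : Real.sqrt d * Real.sqrt d = d := Real.mul_self_sqrt hd0.le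
  have hsum : μ + ν = (p : ℂ) := by
    apply Complex.ext <;> simp [hμ, hν] <;> ring
  have hprod : μ * ν = (s : ℂ) := by
    apply Complex.ext <;>
      simp [hμ, hν, Complex.mul_re, Complex.mul_im] <;> nlinarith [hsd]
  set r : ℝ := Real.sqrt s with hr
  have hr0 : 0 < r := Real.sqrt_pos.mpr hs0
  have hrr : r * r = s := Real.mul_self_sqrt hs0.le
  have hr1 : r ≤ 1 := by nlinarith
  have habsμ : ‖μ‖ = r := by
    rw [Complex.norm_def, Complex.normSq_mk]
    rw [hr]
    congr 1
    nlinarith [hsd]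
  have habsν : ‖ν‖ = r := by
    rw [Complex.norm_def, Complex.normSq_mk]
    rw [hr]
    congr 1
    nlinarith [hsd]
  set S : ℕ → ℂ := fun n => ∑ i ∈ Finset.range (n+1), μ^i * ν^(n-i) with hS
  have L1 : ∀ n, S (n+1) = μ * S n + ν^(n+1) := by
    intro n
    rw [hS]
    simp only
    rw [Finset.sum_range_succ' (fun i => μ^i * ν^(n+1-i)) (n+1)]
    simp only [pow_zero, one_mul, Nat.sub_zero]
    rw [Finset.mul_sum]
    congr 1
    apply Finset.sum_congr rfl
    intro i hi
    have hi' : i ≤ n := Nat.lt_succ_iff.mp (Finset.mem_range.mp hi)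
    have h1 : n + 1 - (i+1) = n - i := by omega
    rw [h1, pow_succ]
    ring
  have hrec : ∀ n, S (n+2) = (p:ℂ) * S (n+1) - (s:ℂ) * S n := by
    intro n
    rw [← hsum, ← hprod]
    linear_combination L1 (n+1) - ν * L1 n
  have hS0 : S 0 = 1 := by simp [hS]
  have hS1 : S 1 = (p : ℂ) := by
    rw [← hsum]
    simp [hS, Finset.sum_range_succ]
    ring
  have key : ∀ n, (((A^n) 0 0 : ℝ) : ℂ) = S n ∧ (((A^(n+1)) 0 0 : ℝ) : ℂ) = S (n+1)
      ∧ (((A^(n+1)) 0 1 : ℝ) : ℂ) = -(s:ℂ) * S n := by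
    intro n
    induction n with
    | zero =>
      refine ⟨by simp [hS0], ?_, ?_⟩
      · rw [hS1, pow_one, hA]; norm_num
      · rw [hS0, pow_one, hA]; push_cast; norm_num
    | succ n ih =>
      obtain ⟨ih0, ih1, ih2⟩ := ih
      have hmul0 : (A^(n+2)) 0 0 = (A^(n+1)) 0 0 * p + (A^(n+1)) 0 1 * 1 := by
        rw [pow_succ]
        simp [Matrix.mul_apply, Fin.sum_univ_two, hA]
      have hmul1 : (A^(n+2)) 0 1 = (A^(n+1)) 0 0 * (-s) := by
        rw [pow_succ]
        simp [Matrix.mul_apply, Fin.sum_univ_two, hA]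
      refine ⟨ih1, ?_, ?_⟩
      · rw [hmul0, hrec n]
        push_cast
        rw [ih1, ih2]
        ring
      · rw [hmul1]
        push_cast
        rw [ih1]
        ring
  have habsS : ∀ n, ‖S n‖ ≤ ((n:ℝ)+1) * r ^ n := by
    intro n
    calc ‖S n‖ ≤ ∑ i ∈ Finset.range (n+1), ‖μ^i * ν^(n-i)‖ :=
          norm_sum_le _ _
      _ = ∑ i ∈ Finset.range (n+1), r ^ n := by
          apply Finset.sum_congr rfl
          intro i hi
          have hi' : i ≤ n := Nat.lt_succ_iff.mp (Finset.mem_range.mp hi)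
          rw [norm_mul, norm_pow, norm_pow, habsμ, habsν, ← pow_add,
            Nat.add_sub_cancel' hi']
      _ = ((n:ℝ)+1) * r ^ n := by
          rw [Finset.sum_const, Finset.card_range]
          push_cast
          ring
  have ha : ∀ n : ℕ, |(A^n) 0 0| ≤ ((n:ℝ)+1) * r ^ n := by
    intro n
    have := (key n).1
    calc |(A^n) 0 0| = ‖(((A^n) 0 0 : ℝ) : ℂ)‖ := by rw [Complex.norm_real, Real.norm_eq_abs]
      _ = ‖S n‖ := by rw [this]
      _ ≤ ((n:ℝ)+1) * r ^ n := habsS n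
  have hb : ∀ n : ℕ, |-((A^n) 0 1)| ≤ ((n:ℝ)+1) * r ^ n := by
    intro n
    rw [abs_neg]
    match n with
    | 0 =>
      simp
    | (m+1) =>
      have h2 := (key m).2.2
      have : |(A^(m+1)) 0 1| = s * ‖S m‖ := by
        rw [← Real.norm_eq_abs, ← Complex.norm_real, h2, norm_mul, norm_neg, Complex.norm_real, Real.norm_eq_abs,
          abs_of_pos hs0]
      rw [this]
      have h3 : s * ‖S m‖ ≤ s * (((m:ℝ)+1) * r ^ m) :=
        mul_le_mul_of_nonneg_left (habsS m) hs0.le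
      have h4 : s * (((m:ℝ)+1) * r ^ m) = ((m:ℝ)+1) * r ^ (m+2) := by
        linear_combination (-((m:ℝ)+1) * r ^ m) * hrr
      have h5 : ((m:ℝ)+1) * r ^ (m+2) ≤ ((m:ℝ)+1) * r ^ (m+1) := by
        apply mul_le_mul_of_nonneg_left _ (by positivity)
        exact pow_le_pow_of_le_one hr0.le hr1 (by omega)
      have h6 : ((m:ℝ)+1) * r ^ (m+1) ≤ (((m:ℕ):ℝ)+1+1) * r ^ (m+1) := by
        have : (0:ℝ) ≤ r ^ (m+1) := by positivity
        nlinarith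
      push_cast at h6 ⊢
      linarith
  have hrt : ∀ n : ℕ, r ^ n ≤ (1 - θ) ^ ((n:ℝ)/2) := by
    intro n
    have e1 : r ^ n = s ^ ((n:ℝ)/2) := by
      rw [hr, Real.sqrt_eq_rpow, ← Real.rpow_natCast (s ^ ((1:ℝ)/2)) n,
        ← Real.rpow_mul hs0.le]
      congr 1
      ring
    rw [e1]
    exact Real.rpow_le_rpow hs0.le hsθ (by positivity)
  have hfin : ∀ n : ℕ, ((n:ℝ)+1) * r ^ n ≤ ((n:ℝ)+1) * (1 - θ) ^ ((n:ℝ)/2) := by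
    intro n
    exact mul_le_mul_of_nonneg_left (hrt n) (by positivity)
  exact max_le (le_trans (ha t) (hfin t)) (le_trans (hb t) (hfin t))
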